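/- Let q_1, …, q_n be integers, not all zero, let n_0 be an integer with |n_0| < (1/2)(|q_1| + ⋯ + |q_n|), and let ν, η_1, …, η_n be nilpotent elements of a commutative ℂ-algebra. Then the function of z given by μ(z) = z^{−n_0} e^{ν} · ∏_{q_j ≠ 0} 1/(z^{−q_j/2} e^{η_j/2} − z^{q_j/2} e^{−η_j/2}) (interpreted coefficientwise in the nilpotents, i.e., each coefficient is a rational function of z after clearing half-integer powers) has every coefficient tending to 0 as z → 0 and as z → ∞. -/

import Mathlib

open Filter Topology NormedSpace

private lemma aux_prod_rpow {ι : Type*} (s : Finset ι) (f : ι → ℝ) {r : ℝ} (hr : 0 < r) :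
    ∏ j ∈ s, r ^ f j = r ^ (∑ j ∈ s, f j) := by
  induction s using Finset.cons_induction with
  | empty => simp
  | cons j s hj ih => rw [Finset.prod_cons, Finset.sum_cons, ih, ← Real.rpow_add hr]

private lemma aux_prod_smul {ι : Type*} {A : Type*} [CommRing A] [Algebra ℂ A]
    (s : Finset ι) (c : ι → ℂ) (x : ι → A) :
    ∏ j ∈ s, c j • x j = (∏ j ∈ s, c j) • ∏ j ∈ s, x j := by
  simp only [Algebra.smul_def, Finset.prod_mul_distrib, map_prod]

private lemma aux_inverse_smul {A : Type*} [NormedCommRing A] [NormedAlgebra ℂ A]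
    (c : ℂ) (x : A) : Ring.inverse (c • x) = c⁻¹ • Ring.inverse x := by
  rcases eq_or_ne c 0 with rfl | hc
  · simp
  by_cases hx : IsUnit x
  · have hcx : IsUnit (c • x) := by
      rw [Algebra.smul_def]
      exact ((isUnit_iff_ne_zero.2 hc).map (algebraMap ℂ A)).mul hx
    have h1 : (c • x) * (c⁻¹ • Ring.inverse x) = 1 := by
      rw [smul_mul_smul_comm, Ring.mul_inverse_cancel x hx, mul_inv_cancel₀ hc, one_smul]
    calc Ring.inverse (c • x)
        = Ring.inverse (c • x) * ((c • x) * (c⁻¹ • Ring.inverse x)) := by rw [h1, mul_one]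
      _ = (Ring.inverse (c • x) * (c • x)) * (c⁻¹ • Ring.inverse x) := by rw [mul_assoc]
      _ = c⁻¹ • Ring.inverse x := by rw [Ring.inverse_mul_cancel _ hcx, one_mul]
  · have hcx : ¬ IsUnit (c • x) := by
      rw [Algebra.smul_def]
      exact fun h => hx (isUnit_of_mul_isUnit_right h)
    rw [Ring.inverse_non_unit _ hx, Ring.inverse_non_unit _ hcx, smul_zero]

/-- Key flip identity for the inverse factors. -/
private lemma aux_flip {A : Type*} [NormedCommRing A] [NormedAlgebra ℂ A]
    {w : ℂ} (hw : w ≠ 0) (m : ℕ) (a b : A) :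
    Ring.inverse (a - (w⁻¹ ^ m) • b) = (-(w ^ m)) • Ring.inverse (b - w ^ m • a) := by
  have h1 : a - (w⁻¹ ^ m) • b = (-(w⁻¹ ^ m)) • (b - w ^ m • a) := by
    rw [smul_sub, smul_smul, neg_mul, ← mul_pow, inv_mul_cancel₀ hw, one_pow, neg_smul,
      neg_smul, one_smul, sub_neg_eq_add]
    abel
  rw [h1, aux_inverse_smul]
  congr 1
  rw [inv_neg, inv_pow, inv_inv]

private lemma aux_tendsto {A : Type*} [NormedCommRing A] [NormedAlgebra ℂ A] [CompleteSpace A]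
    {ι : Type*} (t : Finset ι) (k : ι → ℕ) (hk : ∀ j ∈ t, k j ≠ 0)
    (d e : ι → A) (hd : ∀ j, IsUnit (d j)) (c : A) :
    Tendsto (fun w : ℂ => c * ∏ j ∈ t, Ring.inverse (d j - w ^ k j • e j)) (𝓝 0)
      (𝓝 (c * ∏ j ∈ t, Ring.inverse (d j))) := by
  refine tendsto_const_nhds.mul (tendsto_finset_prod _ fun j hj => ?_)
  have h1 : Tendsto (fun w : ℂ => d j - w ^ k j • e j) (𝓝 0) (𝓝 (d j)) := by
    have h2 : Tendsto (fun w : ℂ => w ^ k j • e j) (𝓝 0) (𝓝 ((0 : A))) := by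
      simpa [zero_pow (hk j hj)] using ((continuous_pow (k j)).tendsto (0 : ℂ)).smul_const (e j)
    simpa using tendsto_const_nhds.sub h2
  have h2 := (NormedRing.inverse_continuousAt (hd j).unit).tendsto
  rw [IsUnit.unit_spec] at h2
  exact h2.comp h1

/-- **Local fixed-point contributions tend to `0` at `z = 0` and `z = ∞`.**
Let `q₁, …, qₙ` be integers, not all zero, let `n₀` be an integer with
`|n₀| < (1/2)(|q₁| + ⋯ + |qₙ|)`, and let `ν, η₁, …, ηₙ` be nilpotent elements of a
commutative (normed) `ℂ`-algebra.  The function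
`μ(z) = z^{−n₀} e^{ν} ∏_{qⱼ ≠ 0} 1/(z^{−qⱼ/2} e^{ηⱼ/2} − z^{qⱼ/2} e^{−ηⱼ/2})`,
written (after factoring `z^{qⱼ/2}` out of each denominator) as
`μ(z) = z^{−n₀} (∏_{qⱼ≠0} z^{qⱼ/2}) ⬝ e^{ν} ∏_{qⱼ ≠ 0} (e^{ηⱼ/2} − z^{qⱼ} e^{−ηⱼ/2})⁻¹`,
tends to `0` (coefficientwise, i.e. in the normed algebra) as `z → 0` and as `z → ∞`. -/
theorem stmt_17 {A : Type*} [NormedCommRing A] [NormedAlgebra ℂ A] [CompleteSpace A]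
    (n : ℕ) (q : Fin n → ℤ) (hq : ∃ j, q j ≠ 0) (n₀ : ℤ)
    (hn₀ : ((|n₀| : ℤ) : ℝ) < (1 / 2) * ∑ j, ((|q j| : ℤ) : ℝ))
    (ν : A) (η : Fin n → A) (hν : IsNilpotent ν) (hη : ∀ j, IsNilpotent (η j)) :
    letI μ : ℂ → A := fun z =>
      (z ^ (-n₀) * ∏ j ∈ Finset.univ.filter (fun j => q j ≠ 0), z ^ ((q j : ℂ) / 2)) •
        (NormedSpace.exp ν * ∏ j ∈ Finset.univ.filter (fun j => q j ≠ 0),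
          Ring.inverse (NormedSpace.exp ((2 : ℂ)⁻¹ • η j) - z ^ (q j) • NormedSpace.exp (-((2 : ℂ)⁻¹ • η j))))
    Tendsto μ (𝓝[≠] (0 : ℂ)) (𝓝 0) ∧ Tendsto μ (Bornology.cobounded ℂ) (𝓝 0) := by
  classical
  set t : Finset (Fin n) := Finset.univ.filter (fun j => q j ≠ 0) with ht
  set k : Fin n → ℕ := fun j => (q j).natAbs with hk
  set a : Fin n → A := fun j => NormedSpace.exp ((2 : ℂ)⁻¹ • η j) with ha
  set b : Fin n → A := fun j => NormedSpace.exp (-((2 : ℂ)⁻¹ • η j)) with hb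
  set d0 : Fin n → A := fun j => if q j < 0 then b j else a j with hd0
  set e0 : Fin n → A := fun j => if q j < 0 then a j else b j with he0
  set d1 : Fin n → A := fun j => if 0 < q j then b j else a j with hd1
  set e1 : Fin n → A := fun j => if 0 < q j then a j else b j with he1
  have hkne : ∀ j ∈ t, k j ≠ 0 := by
    intro j hj
    have hjne : q j ≠ 0 := by rw [ht] at hj; exact (Finset.mem_filter.1 hj).2
    simpa [hk] using Int.natAbs_ne_zero.2 hjne
  have hua : ∀ j, IsUnit (a j) := fun j => NormedSpace.isUnit_exp_of_mem_ball (𝕂 := ℂ) ((NormedSpace.expSeries_radius_eq_top ℂ A).symm ▸ edist_lt_top _ _)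
  have hub : ∀ j, IsUnit (b j) := fun j => NormedSpace.isUnit_exp_of_mem_ball (𝕂 := ℂ) ((NormedSpace.expSeries_radius_eq_top ℂ A).symm ▸ edist_lt_top _ _)
  have hud0 : ∀ j, IsUnit (d0 j) := by
    intro j; rw [hd0]; dsimp only; split_ifs; exacts [hub j, hua j]
  have hud1 : ∀ j, IsUnit (d1 j) := by
    intro j; rw [hd1]; dsimp only; split_ifs; exacts [hub j, hua j]
  -- exponents
  set E0 : ℝ := -(n₀ : ℝ) + ∑ j ∈ t, ((q j : ℝ) / 2 + if q j < 0 then (k j : ℝ) else 0)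
    with hE0def
  set E1 : ℝ := -(n₀ : ℝ) + ∑ j ∈ t, ((q j : ℝ) / 2 + if 0 < q j then -(k j : ℝ) else 0)
    with hE1def
  have habs : ∑ j ∈ t, ((|q j| : ℤ) : ℝ) = ∑ j, ((|q j| : ℤ) : ℝ) := by
    rw [ht]
    refine Finset.sum_filter_of_ne fun j _ h => ?_
    intro h0; rw [h0] at h; simp at h
  have hterm0 : ∀ j ∈ t, ((q j : ℝ) / 2 + if q j < 0 then (k j : ℝ) else 0)
      = ((|q j| : ℤ) : ℝ) / 2 := by
    intro j hj
    have hjne : q j ≠ 0 := by rw [ht] at hj; exact (Finset.mem_filter.1 hj).2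
    have hcast : (k j : ℝ) = ((|q j| : ℤ) : ℝ) := by
      simp only [hk, Int.abs_eq_natAbs]; push_cast [Nat.cast_natAbs]; ring
    rcases hjne.lt_or_gt with h | h
    · rw [if_pos h, hcast]
      have : ((|q j| : ℤ) : ℝ) = -(q j : ℝ) := by
        rw [abs_of_neg h]; push_cast; ring
      rw [this]; ring
    · rw [if_neg (not_lt.2 h.le), add_zero]
      have : ((|q j| : ℤ) : ℝ) = (q j : ℝ) := by rw [abs_of_pos h]
      rw [this]
  have hterm1 : ∀ j ∈ t, ((q j : ℝ) / 2 + if 0 < q j then -(k j : ℝ) else 0)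
      = -(((|q j| : ℤ) : ℝ) / 2) := by
    intro j hj
    have hjne : q j ≠ 0 := by rw [ht] at hj; exact (Finset.mem_filter.1 hj).2
    have hcast : (k j : ℝ) = ((|q j| : ℤ) : ℝ) := by
      simp only [hk, Int.abs_eq_natAbs]; push_cast [Nat.cast_natAbs]; ring
    rcases hjne.lt_or_gt with h | h
    · rw [if_neg (not_lt.2 h.le), add_zero]
      have : ((|q j| : ℤ) : ℝ) = -(q j : ℝ) := by rw [abs_of_neg h]; push_cast; ring
      rw [this]; ring
    · rw [if_pos h, hcast]
      have : ((|q j| : ℤ) : ℝ) = (q j : ℝ) := by rw [abs_of_pos h]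
      rw [this]; ring
  have hhalf : ∑ j ∈ t, ((|q j| : ℤ) : ℝ) / 2 = (1 / 2) * ∑ j, ((|q j| : ℤ) : ℝ) := by
    rw [← Finset.sum_div, habs]; ring
  have hE0 : 0 < E0 := by
    rw [hE0def, Finset.sum_congr rfl hterm0, hhalf]
    have h1 : |(n₀ : ℝ)| < (1 / 2) * ∑ j, ((|q j| : ℤ) : ℝ) := by
      rwa [show |(n₀ : ℝ)| = ((|n₀| : ℤ) : ℝ) by push_cast; ring]
    have := le_abs_self (n₀ : ℝ)
    linarith
  have hE1 : E1 < 0 := by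
    rw [hE1def, Finset.sum_congr rfl hterm1, Finset.sum_neg_distrib, hhalf]
    have h1 : |(n₀ : ℝ)| < (1 / 2) * ∑ j, ((|q j| : ℤ) : ℝ) := by
      rwa [show |(n₀ : ℝ)| = ((|n₀| : ℤ) : ℝ) by push_cast; ring]
    have := neg_abs_le (n₀ : ℝ)
    linarith
  -- the two decompositions of μ for z ≠ 0
  have key0 : ∀ z : ℂ, z ≠ 0 →
      (z ^ (-n₀) * ∏ j ∈ t, z ^ ((q j : ℂ) / 2)) •
        (NormedSpace.exp ν * ∏ j ∈ t, Ring.inverse (a j - z ^ (q j) • b j))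
      = ((z ^ (-n₀) * ∏ j ∈ t, z ^ ((q j : ℂ) / 2)) *
          ∏ j ∈ t, (if q j < 0 then -(z ^ k j) else 1)) •
        (NormedSpace.exp ν * ∏ j ∈ t, Ring.inverse (d0 j - z ^ k j • e0 j)) := by
    intro z hz
    have hfac : ∀ j ∈ t, Ring.inverse (a j - z ^ (q j) • b j)
        = (if q j < 0 then -(z ^ k j) else 1) • Ring.inverse (d0 j - z ^ k j • e0 j) := by
      intro j hj
      by_cases hlt : q j < 0
      · have hq' : q j = -(k j : ℤ) := by
          rw [hk]; simp [Int.ofNat_natAbs_of_nonpos hlt.le]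
        have hzq : z ^ (q j) = z⁻¹ ^ (k j) := by
          rw [hq', zpow_neg, zpow_natCast, inv_pow]
        rw [hzq, if_pos hlt, hd0, he0]
        simp only [if_pos hlt]
        exact aux_flip hz (k j) (a j) (b j)
      · have hq' : (k j : ℤ) = q j := by rw [hk]; simp [Int.natAbs_of_nonneg (not_lt.1 hlt)]
        have hzq : z ^ (q j) = z ^ (k j) := by rw [← hq', zpow_natCast]
        rw [hzq, if_neg hlt, one_smul, hd0, he0]
        simp only [if_neg hlt]
    rw [Finset.prod_congr rfl hfac, aux_prod_smul, mul_smul_comm, smul_smul]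
  have key1 : ∀ z : ℂ, z ≠ 0 →
      (z ^ (-n₀) * ∏ j ∈ t, z ^ ((q j : ℂ) / 2)) •
        (NormedSpace.exp ν * ∏ j ∈ t, Ring.inverse (a j - z ^ (q j) • b j))
      = ((z ^ (-n₀) * ∏ j ∈ t, z ^ ((q j : ℂ) / 2)) *
          ∏ j ∈ t, (if 0 < q j then -(z⁻¹ ^ k j) else 1)) •
        (NormedSpace.exp ν * ∏ j ∈ t, Ring.inverse (d1 j - z⁻¹ ^ k j • e1 j)) := by
    intro z hz
    have hfac : ∀ j ∈ t, Ring.inverse (a j - z ^ (q j) • b j)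
        = (if 0 < q j then -(z⁻¹ ^ k j) else 1) • Ring.inverse (d1 j - z⁻¹ ^ k j • e1 j) := by
      intro j hj
      by_cases hgt : 0 < q j
      · have hq' : (k j : ℤ) = q j := by rw [hk]; simp [Int.natAbs_of_nonneg hgt.le]
        have hzq : z ^ (q j) = (z⁻¹)⁻¹ ^ (k j) := by rw [← hq', zpow_natCast, inv_inv]
        rw [hzq, if_pos hgt, hd1, he1]
        simp only [if_pos hgt]
        exact aux_flip (inv_ne_zero hz) (k j) (a j) (b j)
      · have hjne : q j ≠ 0 := by rw [ht] at hj; exact (Finset.mem_filter.1 hj).2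
        have hlt : q j < 0 := (not_lt.1 hgt).lt_of_ne hjne
        have hq' : q j = -(k j : ℤ) := by
          rw [hk]; simp [Int.ofNat_natAbs_of_nonpos hlt.le]
        have hzq : z ^ (q j) = z⁻¹ ^ (k j) := by
          rw [hq', zpow_neg, zpow_natCast, inv_pow]
        rw [hzq, if_neg hgt, one_smul, hd1, he1]
        simp only [if_neg hgt]
    rw [Finset.prod_congr rfl hfac, aux_prod_smul, mul_smul_comm, smul_smul]
  -- norms of the scalar factors
  have norm0 : ∀ z : ℂ, z ≠ 0 →
      ‖(z ^ (-n₀) * ∏ j ∈ t, z ^ ((q j : ℂ) / 2)) *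
        ∏ j ∈ t, (if q j < 0 then -(z ^ k j) else (1 : ℂ))‖ = ‖z‖ ^ E0 := by
    intro z hz
    have hr : (0 : ℝ) < ‖z‖ := norm_pos_iff.2 hz
    have h1 : ‖z ^ (-n₀)‖ = ‖z‖ ^ (-(n₀ : ℝ)) := by
      rw [norm_zpow]
      rw [show -(n₀ : ℝ) = ((-n₀ : ℤ) : ℝ) by push_cast; ring, Real.rpow_intCast]
    have h2 : ∀ j ∈ t, ‖z ^ ((q j : ℂ) / 2)‖ = ‖z‖ ^ ((q j : ℝ) / 2) := by
      intro j _
      rw [show ((q j : ℂ) / 2) = (((q j : ℝ) / 2 : ℝ) : ℂ) by push_cast; ring]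
      rw [Complex.norm_cpow_real]
    have h3 : ∀ j ∈ t, ‖(if q j < 0 then -(z ^ k j) else (1 : ℂ))‖
        = ‖z‖ ^ (if q j < 0 then (k j : ℝ) else 0) := by
      intro j _
      split_ifs
      · rw [norm_neg, norm_pow, Real.rpow_natCast]
      · simp
    rw [norm_mul, norm_mul, h1, norm_prod, norm_prod, Finset.prod_congr rfl h2,
      Finset.prod_congr rfl h3, aux_prod_rpow t _ hr, aux_prod_rpow t _ hr,
      ← Real.rpow_add hr, ← Real.rpow_add hr, hE0def]
    congr 1
    rw [Finset.sum_add_distrib]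
    ring
  have norm1 : ∀ z : ℂ, z ≠ 0 →
      ‖(z ^ (-n₀) * ∏ j ∈ t, z ^ ((q j : ℂ) / 2)) *
        ∏ j ∈ t, (if 0 < q j then -(z⁻¹ ^ k j) else (1 : ℂ))‖ = ‖z‖ ^ E1 := by
    intro z hz
    have hr : (0 : ℝ) < ‖z‖ := norm_pos_iff.2 hz
    have h1 : ‖z ^ (-n₀)‖ = ‖z‖ ^ (-(n₀ : ℝ)) := by
      rw [norm_zpow]
      rw [show -(n₀ : ℝ) = ((-n₀ : ℤ) : ℝ) by push_cast; ring, Real.rpow_intCast]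
    have h2 : ∀ j ∈ t, ‖z ^ ((q j : ℂ) / 2)‖ = ‖z‖ ^ ((q j : ℝ) / 2) := by
      intro j _
      rw [show ((q j : ℂ) / 2) = (((q j : ℝ) / 2 : ℝ) : ℂ) by push_cast; ring]
      rw [Complex.norm_cpow_real]
    have h3 : ∀ j ∈ t, ‖(if 0 < q j then -(z⁻¹ ^ k j) else (1 : ℂ))‖
        = ‖z‖ ^ (if 0 < q j then -(k j : ℝ) else 0) := by
      intro j _
      split_ifs
      · rw [Real.rpow_neg hr.le, Real.rpow_natCast, norm_neg, norm_pow, norm_inv, inv_pow]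
      · simp
    rw [norm_mul, norm_mul, h1, norm_prod, norm_prod, Finset.prod_congr rfl h2,
      Finset.prod_congr rfl h3, aux_prod_rpow t _ hr, aux_prod_rpow t _ hr,
      ← Real.rpow_add hr, ← Real.rpow_add hr, hE1def]
    congr 1
    rw [Finset.sum_add_distrib]
    ring
  -- scalar factors tend to 0
  have hS0 : Tendsto (fun z : ℂ => (z ^ (-n₀) * ∏ j ∈ t, z ^ ((q j : ℂ) / 2)) *
      ∏ j ∈ t, (if q j < 0 then -(z ^ k j) else (1 : ℂ))) (𝓝[≠] (0 : ℂ)) (𝓝 0) := by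
    rw [tendsto_zero_iff_norm_tendsto_zero]
    have h1 : Tendsto (fun z : ℂ => ‖z‖) (𝓝[≠] (0 : ℂ)) (𝓝 0) := by
      simpa using ((continuous_norm.tendsto (0 : ℂ)).mono_left nhdsWithin_le_nhds)
    have h2 : ContinuousAt (fun x : ℝ => x ^ E0) 0 :=
      Real.continuousAt_rpow_const 0 E0 (Or.inr hE0.le)
    have h3 := h2.tendsto.comp h1
    rw [Real.zero_rpow hE0.ne'] at h3
    refine h3.congr' ?_
    filter_upwards [self_mem_nhdsWithin] with z hz
    exact (norm0 z hz).symm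
  have hS1 : Tendsto (fun z : ℂ => (z ^ (-n₀) * ∏ j ∈ t, z ^ ((q j : ℂ) / 2)) *
      ∏ j ∈ t, (if 0 < q j then -(z⁻¹ ^ k j) else (1 : ℂ))) (Bornology.cobounded ℂ) (𝓝 0) := by
    rw [tendsto_zero_iff_norm_tendsto_zero]
    have h1 : Tendsto (fun z : ℂ => ‖z‖ ^ E1) (Bornology.cobounded ℂ) (𝓝 0) := by
      have h := (tendsto_rpow_neg_atTop (y := -E1) (by linarith)).comp
        (tendsto_norm_cobounded_atTop (E := ℂ))
      simpa [neg_neg, Function.comp_def] using h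
    refine h1.congr' ?_
    have hev : ∀ᶠ z : ℂ in Bornology.cobounded ℂ, z ≠ 0 := by
      filter_upwards [tendsto_norm_cobounded_atTop.eventually_gt_atTop 0] with z hz
      exact norm_pos_iff.1 hz
    filter_upwards [hev] with z hz
    exact (norm1 z hz).symm
  -- vector factors converge
  have hW0 : Tendsto (fun z : ℂ => NormedSpace.exp ν * ∏ j ∈ t, Ring.inverse (d0 j - z ^ k j • e0 j))
      (𝓝[≠] (0 : ℂ)) (𝓝 (NormedSpace.exp ν * ∏ j ∈ t, Ring.inverse (d0 j))) :=
    (aux_tendsto t k hkne d0 e0 hud0 (NormedSpace.exp ν)).mono_left nhdsWithin_le_nhds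
  have hW1 : Tendsto (fun z : ℂ => NormedSpace.exp ν * ∏ j ∈ t, Ring.inverse (d1 j - z⁻¹ ^ k j • e1 j))
      (Bornology.cobounded ℂ) (𝓝 (NormedSpace.exp ν * ∏ j ∈ t, Ring.inverse (d1 j))) := by
    have h := (aux_tendsto t k hkne d1 e1 hud1 (NormedSpace.exp ν)).comp
      (tendsto_inv₀_cobounded (α := ℂ))
    simpa [Function.comp_def] using h
  -- conclude
  have hμ0 : Tendsto (fun z : ℂ =>
      (z ^ (-n₀) * ∏ j ∈ t, z ^ ((q j : ℂ) / 2)) •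
        (NormedSpace.exp ν * ∏ j ∈ t, Ring.inverse (a j - z ^ (q j) • b j))) (𝓝[≠] (0 : ℂ)) (𝓝 0) := by
    have h := hS0.smul hW0
    rw [zero_smul] at h
    refine h.congr' ?_
    filter_upwards [self_mem_nhdsWithin] with z hz
    exact (key0 z hz).symm
  have hμ1 : Tendsto (fun z : ℂ =>
      (z ^ (-n₀) * ∏ j ∈ t, z ^ ((q j : ℂ) / 2)) •
        (NormedSpace.exp ν * ∏ j ∈ t, Ring.inverse (a j - z ^ (q j) • b j)))
      (Bornology.cobounded ℂ) (𝓝 0) := by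
    have h := hS1.smul hW1
    rw [zero_smul] at h
    refine h.congr' ?_
    have hev : ∀ᶠ z : ℂ in Bornology.cobounded ℂ, z ≠ 0 := by
      filter_upwards [tendsto_norm_cobounded_atTop.eventually_gt_atTop 0] with z hz
      exact norm_pos_iff.1 hz
    filter_upwards [hev] with z hz
    exact (key1 z hz).symm
  exact ⟨hμ0, hμ1⟩
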